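/- Let (e_j, f_j), j = 1, …, n, be pairwise orthogonal hyperbolic pairs, and set Σ₂ₙ := i^n * ∏_{j=1}^n (1 − ι e_j * ι f_j) (i = Complex.I; the factors commute). Then Σ₂ₙ² = (−1)^n, i.e. Σ₂ₙ² = 1 if n is even and Σ₂ₙ² = −1 if n is odd. -/

import Mathlib

open CliffordAlgebra QuadraticMap

lemma sq_prod_aux {M : Type*} [Monoid M] :
    ∀ l : List M, l.Pairwise Commute → (∀ x ∈ l, x * x = 1) → l.prod * l.prod = 1 := by
  intro l
  induction l with
  | nil => simp
  | cons a l ih =>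
    intro hp hsq
    rw [List.pairwise_cons] at hp
    have hc : Commute a l.prod := Commute.list_prod_right _ _ fun y hy => hp.1 y hy
    have hl : l.prod * l.prod = 1 := ih hp.2 fun x hx => hsq x (List.mem_cons_of_mem _ hx)
    have ha : a * a = 1 := hsq a List.mem_cons_self
    calc (a :: l).prod * (a :: l).prod = a * (l.prod * a) * l.prod := by
          simp [List.prod_cons, mul_assoc]
      _ = a * (a * l.prod) * l.prod := by rw [hc.eq]
      _ = (a * a) * (l.prod * l.prod) := by simp [mul_assoc]
      _ = 1 := by rw [ha, hl, one_mul]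

/-- Let `(e j, f j)`, `j = 1, …, n`, be pairwise orthogonal hyperbolic pairs and
`Σ₂ₙ = i^n • ∏ j (1 - ι (e j) * ι (f j))`.  Then `Σ₂ₙ² = (-1)^n`. -/
theorem sigma_even_sq {V : Type*} [AddCommGroup V] [Module ℂ V]
    (Q : QuadraticForm ℂ V) (n : ℕ) (e f : Fin n → V)
    (hQe : ∀ j, Q (e j) = 0) (hQf : ∀ j, Q (f j) = 0)
    (hef : ∀ j, polar Q (e j) (f j) = 2)
    (horth : ∀ i j, i ≠ j →
      polar Q (e i) (e j) = 0 ∧ polar Q (e i) (f j) = 0 ∧ polar Q (f i) (f j) = 0)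
    (S : CliffordAlgebra Q)
    (hS : S = (Complex.I ^ n) •
      (List.ofFn (fun j : Fin n => 1 - ι Q (e j) * ι Q (f j))).prod) :
    S * S = (-1) ^ n := by
  -- anticommutation from vanishing polar
  have hac : ∀ x y : V, polar Q x y = 0 → ι Q x * ι Q y = - (ι Q y * ι Q x) := by
    intro x y h
    have := ι_mul_ι_add_swap (Q := Q) x y
    rw [h, map_zero] at this
    exact eq_neg_of_add_eq_zero_left this
  set A : Fin n → CliffordAlgebra Q := fun j => 1 - ι Q (e j) * ι Q (f j) with hA
  -- each factor squares to 1
  have hsq : ∀ j, A j * A j = 1 := by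
    intro j
    have ha : ι Q (e j) * ι Q (e j) = 0 := by
      rw [ι_sq_scalar, hQe, map_zero]
    have hb : ι Q (f j) * ι Q (f j) = 0 := by
      rw [ι_sq_scalar, hQf, map_zero]
    have hba : ι Q (f j) * ι Q (e j) = 2 - ι Q (e j) * ι Q (f j) := by
      have := ι_mul_ι_add_swap (Q := Q) (e j) (f j)
      rw [hef] at this
      have h2 : (algebraMap ℂ (CliffordAlgebra Q)) 2 = 2 := map_ofNat _ 2
      rw [h2, add_comm] at this
      exact eq_sub_of_add_eq this
    have key : ι Q (e j) * ι Q (f j) * (ι Q (e j) * ι Q (f j))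
        = 2 * (ι Q (e j) * ι Q (f j)) := by
      calc ι Q (e j) * ι Q (f j) * (ι Q (e j) * ι Q (f j))
          = ι Q (e j) * (ι Q (f j) * ι Q (e j)) * ι Q (f j) := by
            noncomm_ring
        _ = ι Q (e j) * (2 - ι Q (e j) * ι Q (f j)) * ι Q (f j) := by rw [hba]
        _ = 2 * (ι Q (e j) * ι Q (f j)) - (ι Q (e j) * ι Q (e j)) * (ι Q (f j) * ι Q (f j)) := by
            noncomm_ring
        _ = 2 * (ι Q (e j) * ι Q (f j)) := by rw [ha, hb, mul_zero, sub_zero]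
    show (1 - ι Q (e j) * ι Q (f j)) * (1 - ι Q (e j) * ι Q (f j)) = 1
    have expand : (1 - ι Q (e j) * ι Q (f j)) * (1 - ι Q (e j) * ι Q (f j))
        = 1 - 2 * (ι Q (e j) * ι Q (f j)) + ι Q (e j) * ι Q (f j) * (ι Q (e j) * ι Q (f j)) := by
      noncomm_ring
    rw [expand, key, sub_add_cancel]
  -- distinct factors commute
  have hcomm : ∀ i j : Fin n, i ≠ j → Commute (A i) (A j) := by
    intro i j hij
    obtain ⟨h1, h2, h3⟩ := horth i j hij
    obtain ⟨h1', h2', h3'⟩ := horth j i hij.symm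
    have hee := hac _ _ h1
    have hef' := hac _ _ h2
    have hfe := hac (f i) (e j) (by rw [polar_comm]; exact h2')
    have hff := hac _ _ h3
    have key : ι Q (e i) * ι Q (f i) * (ι Q (e j) * ι Q (f j))
        = ι Q (e j) * ι Q (f j) * (ι Q (e i) * ι Q (f i)) := by
      calc ι Q (e i) * ι Q (f i) * (ι Q (e j) * ι Q (f j))
          = ι Q (e i) * (ι Q (f i) * ι Q (e j)) * ι Q (f j) := by noncomm_ring
        _ = ι Q (e i) * (-(ι Q (e j) * ι Q (f i))) * ι Q (f j) := by rw [hfe]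
        _ = -((ι Q (e i) * ι Q (e j)) * (ι Q (f i) * ι Q (f j))) := by noncomm_ring
        _ = -((-(ι Q (e j) * ι Q (e i))) * (-(ι Q (f j) * ι Q (f i)))) := by rw [hee, hff]
        _ = -(ι Q (e j) * (ι Q (e i) * ι Q (f j)) * ι Q (f i)) := by noncomm_ring
        _ = -(ι Q (e j) * (-(ι Q (f j) * ι Q (e i))) * ι Q (f i)) := by rw [hef']
        _ = ι Q (e j) * ι Q (f j) * (ι Q (e i) * ι Q (f i)) := by noncomm_ring
    show A i * A j = A j * A i
    simp only [hA]
    have expand : ∀ x y : CliffordAlgebra Q, (1 - x) * (1 - y) = 1 - x - y + x * y := by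
      intro x y; noncomm_ring
    rw [expand, expand, key, sub_right_comm]
  -- product squares to 1
  have hP : (List.ofFn A).prod * (List.ofFn A).prod = 1 := by
    apply sq_prod_aux
    · rw [List.pairwise_ofFn]
      intro i j hij
      exact hcomm i j hij.ne
    · intro x hx
      rw [List.mem_ofFn] at hx
      obtain ⟨j, rfl⟩ := hx
      exact hsq j
  rw [hS, smul_mul_smul_comm, hP, ← pow_add, show n + n = 2 * n by ring, pow_mul,
    Complex.I_sq, Algebra.smul_def, mul_one, map_pow, _root_.map_neg, map_one]
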